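/- arXiv:1810.04378 — 6 statements merged into one kernel-verified Lean document; each statement's English description precedes it below -/
import Mathlib

section
/- Let ε ∈ {2,3} be prime, F = ℤ/εℤ, and A' = F[q,q⁻¹]. For q-integers defined by [n]_{q^i} = (q^{in} - q^{-in})/(q^i - q^{-i}), one has ([a]!_{q})^{ε} = [a]!_{q^{ε}} in A' for every natural number a, where [a]!_{q^i} = ∏_{k=1}^{a} [k]_{q^i}. -/
open LaurentPolynomial

/-- For ε ∈ {2,3} prime and q-integers `[n]_{q^i}` in
`(ℤ/εℤ)[q,q⁻¹]` (characterized by `(q^i - q^{-i})·[n]_{q^i} = q^{in} - q^{-in}`),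
one has `([a]!_q)^ε = [a]!_{q^ε}`. -/
theorem stmt0 (ε : ℕ) (hε : ε = 2 ∨ ε = 3) (hp : Nat.Prime ε)
    (qint : ℤ → ℕ → LaurentPolynomial (ZMod ε))
    (hqint : ∀ (i : ℤ) (n : ℕ),
      (T i - T (-i)) * qint i n = T (i * n) - T (-(i * n)))
    (a : ℕ) :
    (∏ k ∈ Finset.range a, qint 1 (k + 1)) ^ ε
      = ∏ k ∈ Finset.range a, qint (ε : ℤ) (k + 1) := by
  haveI : Fact (Nat.Prime ε) := ⟨hp⟩
  haveI : NoZeroDivisors (LaurentPolynomial (ZMod ε)) :=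
    inferInstanceAs (NoZeroDivisors (AddMonoidAlgebra (ZMod ε) ℤ))
  haveI : CharP (LaurentPolynomial (ZMod ε)) ε :=
    charP_of_injective_ringHom
      (f := (C : ZMod ε →+* LaurentPolynomial (ZMod ε)))
      (fun x y h => Polynomial.C_injective
        (Polynomial.toLaurent_injective (by simpa [Polynomial.toLaurent_C] using h))) ε
  have hT : (T (ε : ℤ) - T (-ε) : LaurentPolynomial (ZMod ε)) ≠ 0 := by
    intro h0
    rw [sub_eq_zero] at h0
    have := AddMonoidAlgebra.single_left_injective (M := ℤ) (R := ZMod ε) one_ne_zero h0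
    omega
  have key : ∀ n : ℕ, (qint 1 n) ^ ε = qint (ε : ℤ) n := by
    intro n
    apply mul_left_cancel₀ hT
    have h1 := congrArg (· ^ ε) (hqint 1 n)
    simp only [mul_pow, sub_pow_char, T_pow] at h1
    rw [hqint (ε : ℤ) n]
    rw [show ((ε : ℤ) * n) = (ε : ℤ) * n from rfl]
    have e1 : ((ε : ℕ) * (1 : ℤ)) = (ε : ℤ) := by ring
    have e2 : ((ε : ℕ) * (-1 : ℤ)) = -(ε : ℤ) := by ring
    have e3 : ((ε : ℕ) * ((1:ℤ) * n)) = (ε : ℤ) * n := by ring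
    have e4 : ((ε : ℕ) * (-((1:ℤ) * n))) = -((ε : ℤ) * n) := by ring
    rw [e1, e2, e3, e4] at h1
    exact h1
  rw [← Finset.prod_pow]
  exact Finset.prod_congr rfl fun k _ => key (k + 1)
end

section
/- Let X = (I, (·,·)) be a simply laced Cartan datum and σ : I → I an admissible automorphism (i.e., (σ(α_i), σ(α_j)) = (α_i, α_j) for all i,j, and (α_i, α_j) = 0 whenever i ≠ j lie in the same σ-orbit). Define a symmetric bilinear form on ⊕_{η ∈ Ī} ℚα_η, where Ī is the set of σ-orbits, by (α_η, α_η)₁ = 2|η| and, for η ≠ η', (α_η, α_{η'})₁ = −|{(i,j) ∈ η × η' : (α_i, α_j) ≠ 0}|. Then (Ī, (·,·)₁) is a Cartan datum: (α_η, α_η)₁ ∈ 2ℤ_{>0} for all η, and 2(α_η, α_{η'})₁/(α_η, α_η)₁ ∈ ℤ_{≤0} for η ≠ η'. -/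
/-- `η` is an orbit of the permutation `σ`. -/
def IsOrbit {I : Type*} (σ : Equiv.Perm I) (η : Finset I) : Prop :=
  ∃ i, ∀ j, j ∈ η ↔ ∃ k : ℕ, (σ ^ k) i = j

lemma orbit_mem_iff {I : Type*} [Fintype I] [DecidableEq I] (σ : Equiv.Perm I)
    {η : Finset I} (hη : IsOrbit σ η) : ∀ j, σ j ∈ η ↔ j ∈ η := by
  obtain ⟨i₀, h⟩ := hη
  have hfwd : ∀ j ∈ η, σ j ∈ η := by
    intro j hj
    obtain ⟨k, hk⟩ := (h j).1 hj
    exact (h _).2 ⟨k + 1, by rw [pow_succ', Equiv.Perm.mul_apply, hk]⟩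
  have himg : η.image σ = η := by
    apply Finset.eq_of_subset_of_card_le
    · intro j hj
      obtain ⟨x, hx, rfl⟩ := Finset.mem_image.mp hj
      exact hfwd x hx
    · rw [Finset.card_image_of_injective _ σ.injective]
  intro j
  constructor
  · intro hj
    rw [← himg] at hj
    obtain ⟨x, hx, hxe⟩ := Finset.mem_image.mp hj
    rwa [σ.injective hxe] at hx
  · exact hfwd j

/-- folding a simply laced Cartan datum along an admissible
automorphism yields a Cartan datum. -/
theorem stmt2 {I : Type*} [Fintype I] [DecidableEq I]
    (B : I → I → ℤ)
    (hsymm : ∀ i j, B i j = B j i)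
    (hdiag : ∀ i, B i i = 2)
    (hoff : ∀ i j, i ≠ j → B i j = 0 ∨ B i j = -1)
    (σ : Equiv.Perm I)
    (hσ : ∀ i j, B (σ i) (σ j) = B i j)
    (hadm : ∀ i j, i ≠ j → (∃ k : ℕ, (σ ^ k) i = j) → B i j = 0)
    (B₁ : Finset I → Finset I → ℤ)
    (hB₁diag : ∀ η : Finset I, B₁ η η = 2 * η.card)
    (hB₁off : ∀ η η' : Finset I, η ≠ η' →
      B₁ η η' = -(((η ×ˢ η').filter (fun p => B p.1 p.2 ≠ 0)).card : ℤ))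
    (η η' : Finset I) (hη : IsOrbit σ η) (hη' : IsOrbit σ η') :
    (∃ m : ℤ, 0 < m ∧ B₁ η η = 2 * m) ∧
    (η ≠ η' → ∃ m : ℤ, m ≤ 0 ∧ 2 * B₁ η η' = m * B₁ η η) := by
  obtain ⟨i₀, hi₀⟩ := hη
  have hi₀mem : i₀ ∈ η := (hi₀ i₀).2 ⟨0, rfl⟩
  have hcardpos : 0 < η.card := Finset.card_pos.mpr ⟨i₀, hi₀mem⟩
  constructor
  · exact ⟨η.card, by exact_mod_cast hcardpos, hB₁diag η⟩
  · intro hne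
    -- the fiber count function
    set f : I → ℕ := fun i => (η'.filter (fun j => B i j ≠ 0)).card with hf
    have hmemη' := orbit_mem_iff σ hη'
    have hstep : ∀ i, f (σ i) = f i := by
      intro i
      have : η'.filter (fun j => B (σ i) j ≠ 0)
          = (η'.filter (fun j => B i j ≠ 0)).image σ := by
        ext j
        simp only [Finset.mem_filter, Finset.mem_image]
        constructor
        · intro ⟨hj, hB⟩
          refine ⟨σ⁻¹ j, ⟨?_, ?_⟩, by simp⟩
          · rw [← hmemη' (σ⁻¹ j)]; simpa using hj
          · rw [← hσ i (σ⁻¹ j), ← Equiv.Perm.mul_apply, mul_inv_cancel, Equiv.Perm.one_apply]; exact hB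
        · rintro ⟨x, ⟨hx, hB⟩, rfl⟩
          exact ⟨(hmemη' x).2 hx, by rwa [hσ]⟩
      rw [hf]
      simp only
      rw [this, Finset.card_image_of_injective _ σ.injective]
    have hconst : ∀ j ∈ η, f j = f i₀ := by
      intro j hj
      obtain ⟨k, hk⟩ := (hi₀ j).1 hj
      subst hk
      induction k with
      | zero => rfl
      | succ n ih =>
        rw [pow_succ', Equiv.Perm.mul_apply, hstep]
        exact ih ((hi₀ _).2 ⟨n, rfl⟩)
    have hsum : ((η ×ˢ η').filter (fun p => B p.1 p.2 ≠ 0)).card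
        = η.card * f i₀ := by
      rw [Finset.card_filter, Finset.sum_product]
      have : ∀ i ∈ η, (∑ j ∈ η', if B i j ≠ 0 then 1 else 0) = f i₀ := by
        intro i hi
        rw [← hconst i hi, hf]
        simp [Finset.card_filter]
      rw [Finset.sum_congr rfl this, Finset.sum_const, smul_eq_mul]
    refine ⟨-(f i₀ : ℤ), neg_nonpos.mpr (Int.natCast_nonneg _), ?_⟩
    rw [hB₁off η η' hne, hB₁diag η, hsum]
    push_cast
    ring
end

section
/- In the ℚ(q)-algebra generated by f₁, f₂, f_{2'} subject to the A₃ quantum Serre relations (edges 1–2 and 1–2', and f₂f_{2'} = f_{2'}f₂), with f₁₂ = f₁f₂ − q f₂f₁, f₁₂' = f₁f_{2'} − q f_{2'}f₁, the element Z = f₁²f₂f_{2'} − (q²+1) f₁f₂f_{2'}f₁ + q² f₂f_{2'}f₁² equals (q + q⁻¹) f₁₂ f₁₂'. -/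
/-- The indeterminate `q` in the field `ℚ(q)` of rational functions. -/
noncomputable def qq : RatFunc ℚ := RatFunc.X

/-- Generic form of identity (4.3.8), over an arbitrary commutative scalar ring `R`
with elements `q`, `c` satisfying `q * c = q ^ 2 + 1` (in the application,
`c = q + q⁻¹`). Only the Serre relations on the pairs `(1,2)` and `(1,2')` are
needed. -/
theorem stmt5_aux {R A : Type*} [CommRing R] [Ring A] [Algebra R A]
    (q c : R) (hqc : q * c = q ^ 2 + 1) (f1 f2 f2' : A)
    (h2 : f2 * f1 ^ 2 - c • (f1 * f2 * f1) + f1 ^ 2 * f2 = 0)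
    (h4 : f2' * f1 ^ 2 - c • (f1 * f2' * f1) + f1 ^ 2 * f2' = 0) :
    f1 ^ 2 * f2 * f2' - (q ^ 2 + 1) • (f1 * f2 * f2' * f1)
      + q ^ 2 • (f2 * f2' * f1 ^ 2)
      = c • ((f1 * f2 - q • (f2 * f1)) * (f1 * f2' - q • (f2' * f1))) := by
  have key : f1 ^ 2 * f2 * f2' - (q ^ 2 + 1) • (f1 * f2 * f2' * f1)
      + q ^ 2 • (f2 * f2' * f1 ^ 2)
      - c • ((f1 * f2 - q • (f2 * f1)) * (f1 * f2' - q • (f2' * f1)))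
      = (f2 * f1 ^ 2 - c • (f1 * f2 * f1) + f1 ^ 2 * f2) * f2'
        + q ^ 2 • (f2 * (f2' * f1 ^ 2 - c • (f1 * f2' * f1) + f1 ^ 2 * f2')) := by
    simp only [pow_two, mul_sub, sub_mul, mul_add, add_mul, smul_mul_assoc,
      mul_smul_comm, smul_sub, smul_add, smul_smul, mul_assoc]
    match_scalars <;> first | ring1 | linear_combination hqc
  rw [h2, h4] at key
  simp only [zero_mul, mul_zero, smul_zero, zero_add, add_zero] at key
  exact sub_eq_zero.mp key

/-- identity (4.3.8) in `U_q⁻` of type A₃ (vertices 2,1,2'):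
`Z = f₁²f₂f₂' − (q²+1) f₁f₂f₂'f₁ + q² f₂f₂'f₁² = (q+q⁻¹) f₁₂ f₁₂'`. -/
theorem stmt5 {A : Type*} [Ring A] [Algebra (RatFunc ℚ) A]
    (f1 f2 f2' : A)
    (h1 : f1 * f2 ^ 2 - (qq + qq⁻¹) • (f2 * f1 * f2) + f2 ^ 2 * f1 = 0)
    (h2 : f2 * f1 ^ 2 - (qq + qq⁻¹) • (f1 * f2 * f1) + f1 ^ 2 * f2 = 0)
    (h3 : f1 * f2' ^ 2 - (qq + qq⁻¹) • (f2' * f1 * f2') + f2' ^ 2 * f1 = 0)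
    (h4 : f2' * f1 ^ 2 - (qq + qq⁻¹) • (f1 * f2' * f1) + f1 ^ 2 * f2' = 0)
    (h5 : f2 * f2' = f2' * f2)
    (f12 f12' : A)
    (hf12 : f12 = f1 * f2 - qq • (f2 * f1))
    (hf12' : f12' = f1 * f2' - qq • (f2' * f1)) :
    f1 ^ 2 * f2 * f2' - (qq ^ 2 + 1) • (f1 * f2 * f2' * f1)
      + qq ^ 2 • (f2 * f2' * f1 ^ 2)
      = (qq + qq⁻¹) • (f12 * f12') := by
  have hq : qq ≠ 0 := RatFunc.X_ne_zero
  have hqc : qq * (qq + qq⁻¹) = qq ^ 2 + 1 := by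
    rw [mul_add, mul_inv_cancel₀ hq]; ring
  rw [hf12, hf12']
  exact stmt5_aux qq (qq + qq⁻¹) hqc f1 f2 f2' h2 h4
end

section
/- Let F = ℤ/2ℤ and work in the F[q,q⁻¹]-algebra U generated by f₁, f₁', f₂, f₂' subject to quantum Serre relations of type A₂ × A₂ with σ-twist: edges {1,2} and {1',2'}, all other pairs commute. Let σ be the algebra automorphism swapping f₁ ↔ f₁' and f₂ ↔ f₂', let J be the ideal of U^σ generated by elements x + σ(x), and set g₁ = π(f₁f₁'), g₂ = π(f₂f₂') in V = U^σ/J. Then g₁g₂² − (q² + q⁻²)g₂g₁g₂ + g₂²g₁ = 0. -/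
open LaurentPolynomial

/-- folding of type A₂ × A₂ over `𝔽₂[q,q⁻¹]`.  With
`g₁ = π(f₁f₁')`, `g₂ = π(f₂f₂')` in `V = U^σ/J`, the q²-Serre relation
`g₁g₂² − (q²+q⁻²) g₂g₁g₂ + g₂²g₁ = 0` holds, i.e. the corresponding element of
`U^σ` lies in `J = {x + σ(x) : x ∈ U}`. -/
theorem stmt11 {U : Type*} [Ring U] [Algebra (LaurentPolynomial (ZMod 2)) U]
    (f1 f2 f1' f2' : U)
    (h1 : f1 * f2 ^ 2 - (T 1 + T (-1) : LaurentPolynomial (ZMod 2)) • (f2 * f1 * f2) + f2 ^ 2 * f1 = 0)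
    (h2 : f2 * f1 ^ 2 - (T 1 + T (-1) : LaurentPolynomial (ZMod 2)) • (f1 * f2 * f1) + f1 ^ 2 * f2 = 0)
    (h3 : f1' * f2' ^ 2 - (T 1 + T (-1) : LaurentPolynomial (ZMod 2)) • (f2' * f1' * f2') + f2' ^ 2 * f1' = 0)
    (h4 : f2' * f1' ^ 2 - (T 1 + T (-1) : LaurentPolynomial (ZMod 2)) • (f1' * f2' * f1') + f1' ^ 2 * f2' = 0)
    (h5 : f1 * f1' = f1' * f1) (h6 : f1 * f2' = f2' * f1)
    (h7 : f2 * f1' = f1' * f2) (h8 : f2 * f2' = f2' * f2)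
    (σ : U ≃ₐ[LaurentPolynomial (ZMod 2)] U)
    (hσ1 : σ f1 = f1') (hσ1' : σ f1' = f1)
    (hσ2 : σ f2 = f2') (hσ2' : σ f2' = f2) :
    ∃ x : U,
      (f1 * f1') * (f2 * f2') ^ 2
        - (T 2 + T (-2) : LaurentPolynomial (ZMod 2)) • ((f2 * f2') * (f1 * f1') * (f2 * f2'))
        + (f2 * f2') ^ 2 * (f1 * f1')
      = x + σ x := by
  set a : LaurentPolynomial (ZMod 2) := T 1 + T (-1) with ha
  -- char 2 facts
  have two0 : (2 : LaurentPolynomial (ZMod 2)) = 0 := by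
    have h := map_ofNat (C : ZMod 2 →+* LaurentPolynomial (ZMod 2)) 2
    rw [← h, show ((OfNat.ofNat 2 : ZMod 2)) = 0 by decide, map_zero]
  have haa : a * a = T 2 + T (-2) := by
    rw [ha, add_mul, mul_add, mul_add, ← T_add, ← T_add, ← T_add, ← T_add]
    norm_num
    linear_combination two0
  have htwoU : (2 : U) = 0 := by
    rw [← map_ofNat (algebraMap (LaurentPolynomial (ZMod 2)) U) 2, two0, map_zero]
  have hadd : ∀ y : U, y + y = 0 := fun y => by
    rw [← two_mul, htwoU, zero_mul]
  have hneg : ∀ y : U, -y = y := fun y => by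
    rw [neg_eq_iff_add_eq_zero, hadd]
  -- Serre rearranged
  have e1b : f1 * f2 ^ 2 = a • (f2 * f1 * f2) + f2 ^ 2 * f1 := by
    rw [← sub_eq_zero, ← h1]
    simp only [sub_eq_add_neg, hneg]
    module
  have e3b : f1' * f2' ^ 2 = a • (f2' * f1' * f2') + f2' ^ 2 * f1' := by
    rw [← sub_eq_zero, ← h3]
    simp only [sub_eq_add_neg, hneg]
    module
  -- continuation commuting lemmas
  have c1 : ∀ z, f1' * (f1 * z) = f1 * (f1' * z) := fun z => by
    rw [← mul_assoc, ← h5, mul_assoc]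
  have c2 : ∀ z, f1' * (f2 * z) = f2 * (f1' * z) := fun z => by
    rw [← mul_assoc, ← h7, mul_assoc]
  have c3 : ∀ z, f2' * (f1 * z) = f1 * (f2' * z) := fun z => by
    rw [← mul_assoc, ← h6, mul_assoc]
  have c4 : ∀ z, f2' * (f2 * z) = f2 * (f2' * z) := fun z => by
    rw [← mul_assoc, ← h8, mul_assoc]
  have c1b : f1' * f1 = f1 * f1' := h5.symm
  have c2b : f1' * f2 = f2 * f1' := h7.symm
  have c3b : f2' * f1 = f1 * f2' := h6.symm
  have c4b : f2' * f2 = f2 * f2' := h8.symm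
  -- Serre as rewrite rules (right-associated)
  have e1 : ∀ z, f1 * (f2 * (f2 * z)) = a • (f2 * (f1 * (f2 * z))) + f2 * (f2 * (f1 * z)) := by
    intro z
    have h := congrArg (· * z) e1b
    simp only [add_mul, smul_mul_assoc, pow_two] at h
    calc f1 * (f2 * (f2 * z)) = f1 * f2 * f2 * z := by noncomm_ring
      _ = a • (f2 * f1 * f2 * z) + f2 * f2 * f1 * z := by
          rw [show f1 * f2 * f2 = f1 * (f2 * f2) by rw [mul_assoc]]
          exact h
      _ = _ := by noncomm_ring
  have e3t : f1' * (f2' * f2') = a • (f2' * (f1' * f2')) + f2' * (f2' * f1') := by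
    have h := e3b
    rw [pow_two] at h
    rw [h]; noncomm_ring
  -- choose x
  refine ⟨a • (f2 * (f1 * (f2 * (f2' * (f2' * f1'))))), ?_⟩
  have hσx : σ (a • (f2 * (f1 * (f2 * (f2' * (f2' * f1')))))) =
      a • (f2' * (f1' * (f2' * (f2 * (f2 * f1))))) := by
    simp [map_smul, map_mul, hσ1, hσ1', hσ2, hσ2']
  rw [hσx, ← haa]
  simp only [pow_two, mul_assoc, mul_add, add_mul, smul_mul_assoc, mul_smul_comm, smul_smul,
    c1, c2, c3, c4, c1b, c2b, c3b, c4b, e1, e3t, smul_add]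
  rw [← sub_eq_zero]
  abel_nf
  simp [two_smul, hadd, two_nsmul]
end

section
/- Let F = ℤ/2ℤ and let U be the F[q,q⁻¹]-algebra presented as U_q⁻ of type A₃ with vertex set {2,1,2'} (edges 1–2 and 1–2', f₂f₂' = f₂'f₂). Let σ swap f₂ ↔ f₂' and fix f₁, let J = {x + σ(x)} ⊆ U^σ, π : U^σ → U^σ/J, g₁ = π(f₁), g₂ = π(f₂f₂'). Then g₁g₂² − (q² + q⁻²)g₂g₁g₂ + g₂²g₁ = 0 and g₂g₁³ − (q²+1+q⁻²)g₁g₂g₁² + (q²+1+q⁻²)g₁²g₂g₁ − g₁³g₂ = 0 hold in U^σ/J; i.e., g₁, g₂ satisfy the type B₂ quantum Serre relations. -/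
open LaurentPolynomial

/-- folding of type A₃ (vertices 2,1,2') over `𝔽₂[q,q⁻¹]`.
With `g₁ = π(f₁)`, `g₂ = π(f₂f₂')` in `U^σ/J`, `g₁,g₂` satisfy the type B₂
quantum Serre relations, i.e. the corresponding elements of `U^σ` lie in
`J = {x + σ(x) : x ∈ U}`. -/
theorem stmt12 {U : Type*} [Ring U] [Algebra (LaurentPolynomial (ZMod 2)) U]
    (f1 f2 f2' : U)
    (h1 : f1 * f2 ^ 2 - (T 1 + T (-1) : LaurentPolynomial (ZMod 2)) • (f2 * f1 * f2) + f2 ^ 2 * f1 = 0)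
    (h2 : f2 * f1 ^ 2 - (T 1 + T (-1) : LaurentPolynomial (ZMod 2)) • (f1 * f2 * f1) + f1 ^ 2 * f2 = 0)
    (h3 : f1 * f2' ^ 2 - (T 1 + T (-1) : LaurentPolynomial (ZMod 2)) • (f2' * f1 * f2') + f2' ^ 2 * f1 = 0)
    (h4 : f2' * f1 ^ 2 - (T 1 + T (-1) : LaurentPolynomial (ZMod 2)) • (f1 * f2' * f1) + f1 ^ 2 * f2' = 0)
    (h5 : f2 * f2' = f2' * f2)
    (σ : U ≃ₐ[LaurentPolynomial (ZMod 2)] U)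
    (hσ1 : σ f1 = f1) (hσ2 : σ f2 = f2') (hσ2' : σ f2' = f2) :
    (∃ x : U,
      f1 * (f2 * f2') ^ 2
        - (T 2 + T (-2) : LaurentPolynomial (ZMod 2)) • ((f2 * f2') * f1 * (f2 * f2'))
        + (f2 * f2') ^ 2 * f1
      = x + σ x) ∧
    (∃ x : U,
      (f2 * f2') * f1 ^ 3
        - (T 2 + 1 + T (-2) : LaurentPolynomial (ZMod 2)) • (f1 * (f2 * f2') * f1 ^ 2)
        + (T 2 + 1 + T (-2) : LaurentPolynomial (ZMod 2)) • (f1 ^ 2 * (f2 * f2') * f1)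
        - f1 ^ 3 * (f2 * f2')
      = x + σ x) := by
  have h2R : (2 : LaurentPolynomial (ZMod 2)) = 0 := by
    rw [show (2 : LaurentPolynomial (ZMod 2))
        = algebraMap (ZMod 2) (LaurentPolynomial (ZMod 2)) 2 from (map_ofNat _ 2).symm,
      show (2 : ZMod 2) = 0 from rfl, map_zero]
  have h2U : (2 : U) = 0 := by
    rw [show (2 : U) = algebraMap (LaurentPolynomial (ZMod 2)) U 2 from (map_ofNat _ 2).symm,
      h2R, map_zero]
  have e1 : (T 2 : LaurentPolynomial (ZMod 2)) = T 1 * T 1 := by rw [← T_add]; norm_num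
  have e2 : (T (-2) : LaurentPolynomial (ZMod 2)) = T (-1) * T (-1) := by rw [← T_add]; norm_num
  set A : LaurentPolynomial (ZMod 2) := T 1 + T (-1) with hA
  have hs1 : (T 2 + T (-2) : LaurentPolynomial (ZMod 2)) = A * A := by
    rw [e1, e2, hA]
    linear_combination (-(T 1 * T (-1) : LaurentPolynomial (ZMod 2))) * h2R
  have hs2 : (T 2 + 1 + T (-2) : LaurentPolynomial (ZMod 2)) = A * A + 1 := by
    rw [e1, e2, hA]
    linear_combination (-(T 1 * T (-1) : LaurentPolynomial (ZMod 2))) * h2R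
  obtain ⟨Aa, hAa⟩ : ∃ y : U, y = algebraMap (LaurentPolynomial (ZMod 2)) U A := ⟨_, rfl⟩
  have hsmul : ∀ z : U, A • z = Aa * z := by
    intro z; rw [hAa, Algebra.smul_def]
  have hca : Aa * f1 = f1 * Aa := by rw [hAa]; exact Algebra.commutes _ _
  have hcb : Aa * f2 = f2 * Aa := by rw [hAa]; exact Algebra.commutes _ _
  have hcc : Aa * f2' = f2' * Aa := by rw [hAa]; exact Algebra.commutes _ _
  have hσA : σ Aa = Aa := by rw [hAa]; exact σ.commutes _
  rw [hsmul] at h1 h2 h3 h4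
  have hsmul1 : ∀ z : U, (T 2 + T (-2) : LaurentPolynomial (ZMod 2)) • z = Aa * (Aa * z) := by
    intro z; rw [hs1, mul_smul, hsmul, hsmul]
  have hsmul2 : ∀ z : U, (T 2 + 1 + T (-2) : LaurentPolynomial (ZMod 2)) • z
      = Aa * (Aa * z) + z := by
    intro z; rw [hs2, add_smul, one_smul, mul_smul, hsmul, hsmul]
  constructor
  · refine ⟨Aa * (f2 * f1 * f2 * f2' * f2'), ?_⟩
    rw [hsmul1]
    simp only [map_mul, hσA, hσ1, hσ2, hσ2']
    linear_combination (norm := noncomm_ring)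
      - (f1 * f2) * h5 * (f2')
      - (f2) * h5 * (f2' * f1)
      + (Aa * f2' * f1) * h5 * (f2)
      + h1 * (f2' * f2')
      + (Aa * f2' * f1 * f2) * h5
      - (f2 * f2) * h3
      - (Aa * f2') * h1 * (f2')
      + (f2) * hcb * (f2' * f1 * f2')
      + (Aa) * hcc * (f2 * f1 * f2 * f2')
      - (Aa) * h5 * (f2 * f1 * f2')
      + hcb * (f2 * f2' * f1 * f2')
      + (Aa * Aa) * h5 * (f1 * f2 * f2')
      - (Aa * f2) * h5 * (f1 * f2')
      - (Aa * Aa * f2 * f2' * f1 * f2 * f2') * h2U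
      + (f2 * f2 * f2' * f2' * f1) * h2U
  · refine ⟨0, ?_⟩
    rw [hsmul2, hsmul2]
    simp only [map_zero, add_zero]
    linear_combination (norm := noncomm_ring)
      (f2) * h4 * (f1)
      - (Aa * Aa * f1 * f2) * h4
      - (f1 * f2) * h4
      - hcb * (f1 * f2' * f1 * f1)
      - h2 * (f2' * f1)
      + (Aa * Aa * f1) * hcb * (f1 * f2' * f1)
      + (Aa * Aa * f1) * h2 * (f2')
      + (f1) * hcb * (f1 * f2' * f1)
      + (f1) * h2 * (f2')
      + (Aa * f2 * f1) * h4
      + (Aa * Aa) * hca * (f2 * f1 * f2' * f1)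
      - (Aa * Aa) * hca * (f1 * f2 * f1 * f2')
      + hca * (f2 * f1 * f2' * f1)
      - hca * (f1 * f2 * f1 * f2')
      - (Aa * f2) * hca * (f1 * f2' * f1)
      - (Aa) * h2 * (f1 * f2')
      - (Aa) * hcb * (f1 * f1 * f2' * f1)
      - (Aa * Aa * f1) * h2 * (f2')
      + (Aa * Aa) * h2 * (f2' * f1)
      + (Aa * Aa) * hca * (f1 * f2 * f1 * f2')
      + (f1 * f1 * f2 * f2' * f1) * h2U
      - (f1 * f1 * f1 * f2 * f2') * h2U
      - (Aa * f1 * f2 * f1 * f2' * f1) * h2U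
      + (Aa * f1 * f1 * f2 * f1 * f2') * h2U
end

section
/- In U_q⁻ of type D₄ over ℚ(q), let f₁₂₂'₂'' and f₁₁₂₂'₂'' := f₁₂''f₁₂₂' − q f₁₂₂' f₁₂'' be root vectors (with f₁₂ⱼ as iterated q-brackets as usual). Then f₁ f₁₁₂₂'₂'' = q⁻¹ f₁₁₂₂'₂'' f₁ + (q − q⁻¹)² f₁₂ f₁₂' f₁₂''. -/
lemma qq_ne_zero : qq ≠ 0 := RatFunc.X_ne_zero

lemma one_add_qq_sq_ne_zero : (1 : RatFunc ℚ) + qq ^ 2 ≠ 0 := by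
  have h : (1 : RatFunc ℚ) + qq ^ 2
      = algebraMap (Polynomial ℚ) (RatFunc ℚ) (Polynomial.X ^ 2 + Polynomial.C 1) := by
    simp [qq, map_add, map_pow, RatFunc.algebraMap_X, add_comm]
  rw [h]
  have hp : (Polynomial.X ^ 2 + Polynomial.C (1 : ℚ)) ≠ 0 :=
    Polynomial.X_pow_add_C_ne_zero (by norm_num) 1
  simpa using (RatFunc.algebraMap_ne_zero hp)

section Aux

variable {K A : Type*} [Field K] [Ring A] [Algebra K A]

/-- `u` q-commutes past the root vector `u*x - q•(x*u)`. -/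
lemma aux_key1 (q : K) (hq : q ≠ 0) (u x : A)
    (h : x * u ^ 2 - (q + q⁻¹) • (u * x * u) + u ^ 2 * x = 0) :
    u * (u * x - q • (x * u)) = q⁻¹ • ((u * x - q • (x * u)) * u) := by
  have key : u * (u * x - q • (x * u)) - q⁻¹ • ((u * x - q • (x * u)) * u)
      = x * u ^ 2 - (q + q⁻¹) • (u * x * u) + u ^ 2 * x := by
    simp only [mul_sub, sub_mul, smul_mul_assoc, mul_smul_comm, smul_sub, smul_add, smul_smul,
      sub_smul, add_smul, pow_two, mul_assoc]
    match_scalars <;> (field_simp; try ring)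
  rw [h] at key
  exact sub_eq_zero.mp key

/-- The root vectors `u*x - q•(x*u)` and `u*y - q•(y*u)` commute. -/
lemma aux_pair (q : K) (hq : q ≠ 0) (hq2 : (1 : K) + q ^ 2 ≠ 0) (u x y : A)
    (hx : x * u ^ 2 - (q + q⁻¹) • (u * x * u) + u ^ 2 * x = 0)
    (hy : y * u ^ 2 - (q + q⁻¹) • (u * y * u) + u ^ 2 * y = 0)
    (hxy : x * y = y * x) :
    (u * x - q • (x * u)) * (u * y - q • (y * u))
      = (u * y - q • (y * u)) * (u * x - q • (x * u)) := by
  have hc : x * y - y * x = 0 := sub_eq_zero.mpr hxy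
  have key : ((1 : K) + q ^ 2) • ((u * x - q • (x * u)) * (u * y - q • (y * u))
        - (u * y - q • (y * u)) * (u * x - q • (x * u)))
      = (-q) • ((x * u ^ 2 - (q + q⁻¹) • (u * x * u) + u ^ 2 * x) * y)
        + (q ^ 3) • (y * (x * u ^ 2 - (q + q⁻¹) • (u * x * u) + u ^ 2 * x))
        + q • ((y * u ^ 2 - (q + q⁻¹) • (u * y * u) + u ^ 2 * y) * x)
        - (q ^ 3) • (x * (y * u ^ 2 - (q + q⁻¹) • (u * y * u) + u ^ 2 * y))
        + (q ^ 3) • ((x * y - y * x) * (u * u))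
        - (q * (1 + q ^ 2)) • (u * ((x * y - y * x) * u))
        + q • (u * (u * (x * y - y * x))) := by
    simp only [mul_sub, sub_mul, mul_add, add_mul, smul_mul_assoc, mul_smul_comm, smul_sub,
      smul_add, smul_smul, sub_smul, add_smul, pow_two, pow_succ, pow_zero, one_mul, mul_assoc]
    match_scalars <;> (field_simp; try ring)
  rw [hx, hy, hc] at key
  simp only [zero_mul, mul_zero, smul_zero, add_zero, zero_add, sub_zero] at key
  have h0 : (u * x - q • (x * u)) * (u * y - q • (y * u))
      - (u * y - q • (y * u)) * (u * x - q • (x * u)) = 0 := by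
    have h' := congrArg (fun z => ((1 : K) + q ^ 2)⁻¹ • z) key
    simpa [smul_smul, inv_mul_cancel₀ hq2] using h'
  exact sub_eq_zero.mp h0

/-- The deviation of `u` commuting past `F = B*c - q•(c*B)`. -/
lemma aux_B (q : K) (hq : q ≠ 0) (u c B P' F : A)
    (hP' : P' = u * c - q • (c * u)) (hF : F = B * c - q • (c * B))
    (hE : u * B = q⁻¹ • (B * u)) :
    u * F - F * u - q⁻¹ • (B * P') + q • (P' * B) = 0 := by
  subst hP' hF
  have e0 : u * B - q⁻¹ • (B * u) = 0 := sub_eq_zero.mpr hE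
  have key : u * (B * c - q • (c * B)) - (B * c - q • (c * B)) * u
      - q⁻¹ • (B * (u * c - q • (c * u))) + q • ((u * c - q • (c * u)) * B)
      = (u * B - q⁻¹ • (B * u)) * c - (q ^ 2) • (c * (u * B - q⁻¹ • (B * u))) := by
    simp only [mul_sub, sub_mul, smul_mul_assoc, mul_smul_comm, smul_sub, smul_add, smul_smul,
      sub_smul, add_smul, pow_two, mul_assoc]
    match_scalars <;> (field_simp; try ring)
  rw [e0] at key
  simpa using key

/-- Main assembly lemma. -/
lemma aux_main (q : K) (hq : q ≠ 0) (a B C D F G : A)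
    (hG : G = D * F - q • (F * D))
    (hE : a * D = q⁻¹ • (D * a))
    (hDB : a * F - F * a - q⁻¹ • (B * C) + q • (C * B) = 0)
    (c1 : B * C = C * B) (c2 : B * D = D * B) (c3 : C * D = D * C) :
    a * G = q⁻¹ • (G * a) + ((q - q⁻¹) ^ 2) • (B * C * D) := by
  subst hG
  have e0 : a * D - q⁻¹ • (D * a) = 0 := sub_eq_zero.mpr hE
  have z1 : B * C - C * B = 0 := sub_eq_zero.mpr c1
  have z2 : B * D - D * B = 0 := sub_eq_zero.mpr c2
  have z3 : C * D - D * C = 0 := sub_eq_zero.mpr c3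
  have key : a * (D * F - q • (F * D)) - q⁻¹ • ((D * F - q • (F * D)) * a)
        - ((q - q⁻¹) ^ 2) • (B * C * D)
      = (a * D - q⁻¹ • (D * a)) * F - q • (F * (a * D - q⁻¹ • (D * a)))
        + q⁻¹ • (D * (a * F - F * a - q⁻¹ • (B * C) + q • (C * B)))
        - q • ((a * F - F * a - q⁻¹ • (B * C) + q • (C * B)) * D)
        - ((q ^ 2)⁻¹) • ((B * D - D * B) * C)
        - ((q ^ 2)⁻¹) • (B * (C * D - D * C))
        + C * (B * D - D * B) + (C * D - D * C) * B
        + ((1 : K) - q ^ 2) • ((B * C - C * B) * D) := by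
    simp only [mul_sub, sub_mul, mul_add, add_mul, smul_mul_assoc, mul_smul_comm, smul_sub,
      smul_add, smul_smul, sub_smul, add_smul, pow_two, mul_assoc]
    match_scalars <;> (field_simp; try ring)
  rw [e0, hDB, z1, z2, z3] at key
  simp only [zero_mul, mul_zero, smul_zero, add_zero, zero_add, sub_zero, zero_sub, neg_zero] at key
  have := sub_eq_zero.mp key
  linear_combination (norm := abel) this

end Aux

/-- identity (3.5.9) in `U_q⁻` of type D₄:
`f₁ f₁₁₂₂'₂'' = q⁻¹ f₁₁₂₂'₂'' f₁ + (q − q⁻¹)² f₁₂ f₁₂' f₁₂''`. -/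
theorem stmt16 {A : Type*} [Ring A] [Algebra (RatFunc ℚ) A]
    (f1 f2 f2' f2'' : A)
    (h1 : f1 * f2 ^ 2 - (qq + qq⁻¹) • (f2 * f1 * f2) + f2 ^ 2 * f1 = 0)
    (h2 : f2 * f1 ^ 2 - (qq + qq⁻¹) • (f1 * f2 * f1) + f1 ^ 2 * f2 = 0)
    (h3 : f1 * f2' ^ 2 - (qq + qq⁻¹) • (f2' * f1 * f2') + f2' ^ 2 * f1 = 0)
    (h4 : f2' * f1 ^ 2 - (qq + qq⁻¹) • (f1 * f2' * f1) + f1 ^ 2 * f2' = 0)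
    (h5 : f1 * f2'' ^ 2 - (qq + qq⁻¹) • (f2'' * f1 * f2'') + f2'' ^ 2 * f1 = 0)
    (h6 : f2'' * f1 ^ 2 - (qq + qq⁻¹) • (f1 * f2'' * f1) + f1 ^ 2 * f2'' = 0)
    (h7 : f2 * f2' = f2' * f2) (h8 : f2 * f2'' = f2'' * f2)
    (h9 : f2' * f2'' = f2'' * f2')
    (f12 f12' f12'' f122' f122'2'' f1122'2'' : A)
    (hf12 : f12 = f1 * f2 - qq • (f2 * f1))
    (hf12' : f12' = f1 * f2' - qq • (f2' * f1))
    (hf12'' : f12'' = f1 * f2'' - qq • (f2'' * f1))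
    (hf122' : f122' = f12 * f2' - qq • (f2' * f12))
    (hf122'2'' : f122'2'' = f122' * f2'' - qq • (f2'' * f122'))
    (hf1122'2'' : f1122'2'' = f12'' * f122' - qq • (f122' * f12'')) :
    f1 * f1122'2''
      = qq⁻¹ • (f1122'2'' * f1) + ((qq - qq⁻¹) ^ 2) • (f12 * f12' * f12'') := by
  have hq := qq_ne_zero
  have hq2 := one_add_qq_sq_ne_zero
  have qA2 : f1 * f12 = qq⁻¹ • (f12 * f1) := by
    rw [hf12]; exact aux_key1 qq hq f1 f2 h2
  have qA2'' : f1 * f12'' = qq⁻¹ • (f12'' * f1) := by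
    rw [hf12'']; exact aux_key1 qq hq f1 f2'' h6
  have c1 : f12 * f12' = f12' * f12 := by
    rw [hf12, hf12']; exact aux_pair qq hq hq2 f1 f2 f2' h2 h4 h7
  have c2 : f12 * f12'' = f12'' * f12 := by
    rw [hf12, hf12'']; exact aux_pair qq hq hq2 f1 f2 f2'' h2 h6 h8
  have c3 : f12' * f12'' = f12'' * f12' := by
    rw [hf12', hf12'']; exact aux_pair qq hq hq2 f1 f2' f2'' h4 h6 h9
  have hDB : f1 * f122' - f122' * f1 - qq⁻¹ • (f12 * f12') + qq • (f12' * f12) = 0 :=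
    aux_B qq hq f1 f2' f12 f12' f122' hf12' hf122' qA2
  exact aux_main qq hq f1 f12 f12' f12'' f122' f1122'2'' hf1122'2'' qA2'' hDB c1 c2 c3
end
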